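/- The HRC rule in Example (RAM violation): For X = {a,b,c} with LA attention index η given by η({a,b,c})=0.20, η({a,b})=0.30, η({a,c})=0.01, η({b,c})=0.10, η({a})=0.05, η({b})=0.05, η({c})=0.10, η(∅)=0.19, and preferences π placing probability 1/2 each on a≻₁b≻₁c and c≻₂b≻₂a, the induced stochastic choice rule satisfies p(a,{a,b,c}) > p(a,{a,c}) and p(b,{a,b,c}) > p(b,{b,c}). -/
import Mathlib


open Classical Finset

/-- The LA choice rule with fixed preference `r` and attention index `η`. -/
noncomputable def laChoice {X : Type*} [DecidableEq X]
    (η : Finset X → ℝ) (r : X → X → Prop) (x : X) (A : Finset X) : ℝ :=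
  (∑ D ∈ A.powerset,
      if x ∈ D ∧ ∀ y ∈ D, y ≠ x → r x y then η D else 0) /
    ∑ C ∈ A.powerset, η C

/-- The attention index of the RAM-violation example: `a = 0`, `b = 1`, `c = 2`. -/
noncomputable def ηEx : Finset (Fin 3) → ℝ := fun C =>
  if C = {0, 1, 2} then 0.20
  else if C = {0, 1} then 0.30
  else if C = {0, 2} then 0.01
  else if C = {1, 2} then 0.10
  else if C = {0} then 0.05
  else if C = {1} then 0.05
  else if C = {2} then 0.10
  else 0.19

/-- The LA-HRC rule with attention index `ηEx` and preferences placing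
probability 1/2 each on `a ≻₁ b ≻₁ c` (i.e. `· < ·` on `Fin 3`) and
`c ≻₂ b ≻₂ a` (i.e. `· > ·`). -/
noncomputable def pEx (x : Fin 3) (A : Finset (Fin 3)) : ℝ :=
  (1 / 2) * laChoice ηEx (· < ·) x A + (1 / 2) * laChoice ηEx (· > ·) x A

set_option maxHeartbeats 1000000 in
lemma sum8' (f : Finset (Fin 3) → ℝ) :
    ∑ x ∈ ({∅,{0},{1},{0,1},{2},{0,2},{1,2},{0,1,2}} : Finset (Finset (Fin 3))), f x =
    f ∅ + f {0} + f {1} + f {0,1} + f {2} + f {0,2} + f {1,2} + f {0,1,2} := by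
  rw [sum_insert (by decide), sum_insert (by decide), sum_insert (by decide),
    sum_insert (by decide), sum_insert (by decide), sum_insert (by decide),
    sum_insert (by decide), sum_singleton]; ring

lemma sum4a' (f : Finset (Fin 3) → ℝ) :
    ∑ x ∈ ({∅,{0},{2},{0,2}} : Finset (Finset (Fin 3))), f x =
    f ∅ + f {0} + f {2} + f {0,2} := by
  rw [sum_insert (by decide), sum_insert (by decide), sum_insert (by decide), sum_singleton]; ring

lemma sum4b' (f : Finset (Fin 3) → ℝ) :
    ∑ x ∈ ({∅,{1},{2},{1,2}} : Finset (Finset (Fin 3))), f x =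
    f ∅ + f {1} + f {2} + f {1,2} := by
  rw [sum_insert (by decide), sum_insert (by decide), sum_insert (by decide), sum_singleton]; ring

set_option maxHeartbeats 1000000 in
/-- The HRC rule of the example violates regularity twice:
`p(a,{a,b,c}) > p(a,{a,c})` and `p(b,{a,b,c}) > p(b,{b,c})`, producing the
revealed-preference cycle that rules out a RAM representation. -/
theorem example_RAM_violation :
    pEx 0 ({0, 1, 2} : Finset (Fin 3)) > pEx 0 ({0, 2} : Finset (Fin 3)) ∧
    pEx 1 ({0, 1, 2} : Finset (Fin 3)) > pEx 1 ({1, 2} : Finset (Fin 3)) := by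
  have h1 : ({0,1,2} : Finset (Fin 3)).powerset = {∅,{0},{1},{0,1},{2},{0,2},{1,2},{0,1,2}} := by decide
  have h2 : ({0,2} : Finset (Fin 3)).powerset = {∅,{0},{2},{0,2}} := by decide
  have h3 : ({1,2} : Finset (Fin 3)).powerset = {∅,{1},{2},{1,2}} := by decide
  constructor
  · simp only [pEx, laChoice, h1, h2, sum8', sum4a']
    simp (config := { decide := true }) only [ηEx]
    norm_num
  · simp only [pEx, laChoice, h1, h3, sum8', sum4b']
    simp (config := { decide := true }) only [ηEx]
    norm_num
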